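/- Let n ≥ 1 and let A be a set partition of {1,…,n}. Then the depth index of A equals the number of strict inequalities along south-west to north-east antidiagonals of the rank-control matrix of M(A): t(A) = D(A), where D(A) = #{(i,j) : 2 ≤ i ≤ n, 1 ≤ j ≤ n−1, r_{i,j} ≠ r_{i−1,j+1}}. -/

import Mathlib

open Finset
open scoped Classical

noncomputable section

/-- The arcs of a set partition `A` of `{1,…,n}`: pairs `(i,j)` with `i < j`, `i` and `j` in
the same block, and no element of that block strictly between `i` and `j`. -/
noncomputable def arcs (n : ℕ) (A : Finpartition (Finset.Icc 1 n)) : Finset (ℕ × ℕ) :=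
  (Finset.Icc 1 n ×ˢ Finset.Icc 1 n).filter
    (fun p => p.1 < p.2 ∧ ∃ B ∈ A.parts, p.1 ∈ B ∧ p.2 ∈ B ∧
      ∀ k ∈ B, ¬ (p.1 < k ∧ k < p.2))

/-- The depth of a vertex `v`: the number of arcs `(i,j)` with `i < v < j`. -/
noncomputable def vertexDepth (n : ℕ) (A : Finpartition (Finset.Icc 1 n)) (v : ℕ) : ℕ :=
  ((arcs n A).filter (fun p => p.1 < v ∧ v < p.2)).card

/-- The depth of an arc `α = (u,v)`: the number of arcs `(i,j)` with `i < u < v < j`. -/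
noncomputable def arcDepth (n : ℕ) (A : Finpartition (Finset.Icc 1 n)) (α : ℕ × ℕ) : ℕ :=
  ((arcs n A).filter (fun p => p.1 < α.1 ∧ α.2 < p.2)).card

/-- The depth index `t(A) = Σ_{i=1}^m (n−i) − Σ_{v=1}^n depth(v) + Σ_{α} depth(α)`,
where `m` is the number of arcs of `A`. -/
noncomputable def depthIndex (n : ℕ) (A : Finpartition (Finset.Icc 1 n)) : ℤ :=
  (∑ i ∈ Finset.Icc 1 (arcs n A).card, ((n : ℤ) - (i : ℤ)))
    - ∑ v ∈ Finset.Icc 1 n, (vertexDepth n A v : ℤ)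
    + ∑ α ∈ arcs n A, (arcDepth n A α : ℤ)

/-- The intertwining number of `A`: the sum over all unordered pairs of distinct blocks
`{B, C}` of the number of pairs `(b,c) ∈ B × C` with no element of `B ∪ C` strictly between
them.  Since distinct blocks are disjoint, this equals the number of pairs `(x,y)` with
`x < y` lying in different blocks `B ∋ x`, `C ∋ y` such that no element of `B ∪ C` lies
strictly between `x` and `y`. -/
noncomputable def inumber (n : ℕ) (A : Finpartition (Finset.Icc 1 n)) : ℕ :=
  ((Finset.Icc 1 n ×ˢ Finset.Icc 1 n).filter
    (fun p => p.1 < p.2 ∧ ∃ B ∈ A.parts, ∃ C ∈ A.parts, B ≠ C ∧ p.1 ∈ B ∧ p.2 ∈ C ∧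
      ∀ k ∈ B ∪ C, ¬ (p.1 < k ∧ k < p.2))).card

/-- `u` and `v` lie in the same block of `A`. -/
def sameBlock (n : ℕ) (A : Finpartition (Finset.Icc 1 n)) (u v : ℕ) : Prop :=
  ∃ B ∈ A.parts, u ∈ B ∧ v ∈ B

/-- The partner of `v`: `0` if `v` is the minimum of its block, and otherwise the largest
element of the block of `v` smaller than `v`. -/
noncomputable def partner (n : ℕ) (A : Finpartition (Finset.Icc 1 n)) (v : ℕ) : ℕ :=
  ((Finset.Icc 1 n).filter (fun u => u < v ∧ sameBlock n A u v)).sup id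

/-- The partial depth index `t_v(A) = u + #{arcs (i,j) : u < i < j < v}`, where `u` is the
partner of `v`. -/
noncomputable def partialDepthIndex (n : ℕ) (A : Finpartition (Finset.Icc 1 n)) (v : ℕ) : ℕ :=
  partner n A v +
    ((arcs n A).filter (fun p => partner n A v < p.1 ∧ p.2 < v)).card

/-- The partial intertwining number `i_v(A)`: the number of `i` with `u < i < v` (where `u`
is the partner of `v`) such that `i` has no successor in its block, or the successor of `i`
in its block is greater than `v`; i.e. every element of the block of `i` larger than `i`
is larger than `v`. -/
noncomputable def partialInumber (n : ℕ) (A : Finpartition (Finset.Icc 1 n)) (v : ℕ) : ℕ :=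
  ((Finset.Icc 1 n).filter
    (fun i => partner n A v < i ∧ i < v ∧
      ∀ j, sameBlock n A i j → i < j → v < j)).card

/-- The adjacency matrix of `A`: the `n × n` rational matrix whose `(i,j)` entry is `1` if
`(i+1, j+1)` is an arc of `A` (indices shifted from `Fin n` to `{1,…,n}`) and `0` otherwise. -/
noncomputable def adjMatrix (n : ℕ) (A : Finpartition (Finset.Icc 1 n)) :
    Matrix (Fin n) (Fin n) ℚ :=
  fun i j => if ((i : ℕ) + 1, (j : ℕ) + 1) ∈ arcs n A then 1 else 0

/-- The rank-control matrix entry `r_{i,j}` of an `n × n` matrix `M`: the rank of the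
submatrix of `M` consisting of rows `{i, i+1, …, n}` and columns `{1, …, j}`
(in 1-based indexing). -/
noncomputable def rankControl (n : ℕ) (M : Matrix (Fin n) (Fin n) ℚ) (i j : ℕ) : ℕ :=
  (M.submatrix (fun k : {k : Fin n // i ≤ (k : ℕ) + 1} => (k : Fin n))
               (fun l : {l : Fin n // (l : ℕ) + 1 ≤ j} => (l : Fin n))).rank

end

open Matrix

lemma arc_bounds {n : ℕ} {A : Finpartition (Finset.Icc 1 n)} {p : ℕ × ℕ}
    (hp : p ∈ arcs n A) :
    1 ≤ p.1 ∧ p.1 < p.2 ∧ p.2 ≤ n := by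
  simp only [arcs, mem_filter, mem_product, mem_Icc] at hp
  exact ⟨hp.1.1.1, hp.2.1, hp.1.2.2⟩

lemma left_unique {n : ℕ} {A : Finpartition (Finset.Icc 1 n)} {p q : ℕ × ℕ}
    (hp : p ∈ arcs n A)
    (hq : q ∈ arcs n A)
    (h : p.1 = q.1) : p = q := by
  simp only [arcs, mem_filter, mem_product, mem_Icc] at hp hq
  obtain ⟨-, hlt, B, hB, h1B, h2B, hbet⟩ := hp
  obtain ⟨-, hlt', C, hC, h1C, h2C, hbet'⟩ := hq
  have hBC : B = C := A.eq_of_mem_parts hB hC h1B (h ▸ h1C)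
  subst hBC
  rcases lt_trichotomy p.2 q.2 with hl | he | hg
  · exact absurd ⟨h ▸ hlt, hl⟩ (hbet' p.2 h2B)
  · exact Prod.ext h he
  · exact absurd ⟨h ▸ hlt', hg⟩ (hbet q.2 h2C)

lemma right_unique {n : ℕ} {A : Finpartition (Finset.Icc 1 n)} {p q : ℕ × ℕ}
    (hp : p ∈ arcs n A)
    (hq : q ∈ arcs n A)
    (h : p.2 = q.2) : p = q := by
  simp only [arcs, mem_filter, mem_product, mem_Icc] at hp hq
  obtain ⟨-, hlt, B, hB, h1B, h2B, hbet⟩ := hp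
  obtain ⟨-, hlt', C, hC, h1C, h2C, hbet'⟩ := hq
  have hBC : B = C := A.eq_of_mem_parts hB hC h2B (h ▸ h2C)
  subst hBC
  rcases lt_trichotomy p.1 q.1 with hl | he | hg
  · exact absurd ⟨hl, h ▸ hlt'⟩ (hbet q.1 h1C)
  · exact Prod.ext he h
  · exact absurd ⟨hg, h ▸ hlt⟩ (hbet' p.1 h1B)


lemma single_idx_inj {R : Type*} [DecidableEq R] {r₁ r₂ : R}
    (h : (Pi.single r₁ 1 : R → ℚ) = Pi.single r₂ 1) : r₁ = r₂ := by
  by_contra hne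
  have := congrFun h r₁
  rw [Pi.single_eq_same, Pi.single_eq_of_ne hne] at this
  exact one_ne_zero this

lemma rank_of_single_cols {R C : Type*} [Fintype R] [Fintype C] [DecidableEq R] [DecidableEq C]
    (M : Matrix R C ℚ)
    (hcol : ∀ c, Mᵀ c = 0 ∨ ∃ r, Mᵀ c = Pi.single r 1)
    (hinj : ∀ c₁ c₂ r, Mᵀ c₁ = Pi.single r 1 → Mᵀ c₂ = Pi.single r 1 → c₁ = c₂) :
    M.rank = (Finset.univ.filter (fun c => Mᵀ c ≠ 0)).card := by
  classical
  set RS : Finset R := Finset.univ.filter (fun r => ∃ c, Mᵀ c = Pi.single r 1) with hRS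
  have memRS : ∀ r, r ∈ RS ↔ ∃ c, Mᵀ c = Pi.single r 1 := by
    intro r; simp [hRS]
  have hspan : Submodule.span ℚ (Set.range Mᵀ) =
      Submodule.span ℚ (Set.range (fun r : RS => (Pi.single (r : R) 1 : R → ℚ))) := by
    apply le_antisymm
    · rw [Submodule.span_le]; rintro _ ⟨c, rfl⟩
      rcases hcol c with h | ⟨r, h⟩
      · rw [h]; exact Submodule.zero_mem _
      · rw [h]; exact Submodule.subset_span ⟨⟨r, (memRS r).2 ⟨c, h⟩⟩, rfl⟩
    · rw [Submodule.span_le]; rintro _ ⟨⟨r, hr⟩, rfl⟩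
      obtain ⟨c, hc⟩ := (memRS r).1 hr
      exact Submodule.subset_span ⟨c, hc⟩
  have hli : LinearIndependent ℚ (fun r : RS => (Pi.single (r : R) 1 : R → ℚ)) := by
    have h1 := (Pi.basisFun ℚ R).linearIndependent
    have h2 := h1.comp (Subtype.val : RS → R) Subtype.val_injective
    convert h2 using 1
    funext r
    simp [Pi.basisFun_apply]
  rw [Matrix.rank_eq_finrank_span_cols, show M.col = Mᵀ from rfl, hspan, finrank_span_eq_card hli, Fintype.card_coe]
  have key : ∀ r ∈ RS, ∃ c, Mᵀ c = Pi.single r 1 := fun r hr => (memRS r).1 hr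
  apply Finset.card_bij (fun r hr => Classical.choose (key r hr))
  · intro r hr
    have hspec := Classical.choose_spec (key r hr)
    simp only [mem_filter, mem_univ, true_and]
    intro h0
    rw [h0] at hspec
    have := congrFun hspec r
    rw [Pi.single_eq_same] at this
    exact one_ne_zero this.symm
  · intro r₁ hr₁ r₂ hr₂ heq
    have h1 := Classical.choose_spec (key r₁ hr₁)
    have h2 := Classical.choose_spec (key r₂ hr₂)
    rw [heq] at h1
    exact single_idx_inj (h1.symm.trans h2)
  · intro c hc
    simp only [mem_filter, mem_univ, true_and] at hc
    rcases hcol c with h | ⟨r, h⟩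
    · exact absurd h hc
    · have hr : r ∈ RS := (memRS r).2 ⟨c, h⟩
      refine ⟨r, hr, ?_⟩
      exact hinj _ _ r (Classical.choose_spec (key r hr)) h

open Matrix in
lemma rankControl_adj (n : ℕ) (A : Finpartition (Finset.Icc 1 n)) (i j : ℕ) :
    rankControl n (adjMatrix n A) i j
      = ((arcs n A).filter (fun p => i ≤ p.1 ∧ p.2 ≤ j)).card := by
  classical
  set N : Matrix {k : Fin n // i ≤ (k : ℕ) + 1} {l : Fin n // (l : ℕ) + 1 ≤ j} ℚ :=
    (adjMatrix n A).submatrix (fun k => (k : Fin n)) (fun l => (l : Fin n)) with hN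
  have hEntry : ∀ r c, N r c =
      (if (((r : Fin n) : ℕ) + 1, ((c : Fin n) : ℕ) + 1) ∈ arcs n A then (1:ℚ) else 0) := by
    intro r c; rfl
  have hrank : rankControl n (adjMatrix n A) i j = N.rank := rfl
  rw [hrank]
  rw [rank_of_single_cols N ?hcol ?hinj]
  case hcol =>
    intro c
    by_cases h : ∃ a, (a, ((c : Fin n) : ℕ) + 1) ∈ arcs n A ∧ i ≤ a
    · right
      obtain ⟨a, ha, hia⟩ := h
      have hb := arc_bounds (A := A) ha
      simp only at hb
      have hcn : ((c : Fin n) : ℕ) < n := (c : Fin n).isLt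
      refine ⟨⟨⟨a - 1, by omega⟩, by simp; omega⟩, ?_⟩
      funext r
      by_cases hr : r = ⟨⟨a - 1, by omega⟩, by simp; omega⟩
      · rw [hr, Pi.single_eq_same]
        show N _ c = 1
        rw [hEntry]
        have e1 : ((((⟨⟨a - 1, by omega⟩, by simp; omega⟩ :
            {k : Fin n // i ≤ (k : ℕ) + 1}) : Fin n) : ℕ)) + 1 = a := by
          show a - 1 + 1 = a; omega
        rw [e1, if_pos ha]
      · rw [Pi.single_eq_of_ne hr]
        show N r c = 0
        rw [hEntry, if_neg]
        intro hmem
        apply hr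
        have := right_unique (A := A) hmem ha rfl
        have h2 : ((r : Fin n) : ℕ) + 1 = a := congrArg Prod.fst this
        apply Subtype.ext; apply Fin.ext
        simp only
        omega
    · left
      funext r
      show N r c = 0
      rw [hEntry, if_neg]
      intro hmem
      exact h ⟨((r : Fin n) : ℕ) + 1, hmem, r.2⟩
  case hinj =>
    intro c₁ c₂ r h1 h2
    have e1 := congrFun h1 r
    have e2 := congrFun h2 r
    rw [Pi.single_eq_same] at e1 e2
    have m1 : (((r : Fin n) : ℕ) + 1, ((c₁ : Fin n) : ℕ) + 1) ∈ arcs n A := by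
      by_contra hmem
      rw [show (Nᵀ c₁) r = N r c₁ from rfl, hEntry, if_neg hmem] at e1
      exact one_ne_zero e1.symm
    have m2 : (((r : Fin n) : ℕ) + 1, ((c₂ : Fin n) : ℕ) + 1) ∈ arcs n A := by
      by_contra hmem
      rw [show (Nᵀ c₂) r = N r c₂ from rfl, hEntry, if_neg hmem] at e2
      exact one_ne_zero e2.symm
    have := left_unique (A := A) m1 m2 rfl
    have h2 : ((c₁ : Fin n) : ℕ) + 1 = ((c₂ : Fin n) : ℕ) + 1 := congrArg Prod.snd this
    apply Subtype.ext; apply Fin.ext; omega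
  symm
  refine Finset.card_bij (fun p hp => (⟨⟨p.2 - 1, ?_⟩, ?_⟩ : {l : Fin n // (l : ℕ) + 1 ≤ j})) ?_ ?_ ?_
  case refine_1 =>
    have hp' := Finset.mem_filter.mp hp
    have hb := arc_bounds (A := A) hp'.1
    omega
  case refine_2 =>
    have hp' := Finset.mem_filter.mp hp
    have hb := arc_bounds (A := A) hp'.1
    have := hp'.2
    simp only at this ⊢
    omega
  case refine_3 =>
    intro p hp
    simp only [Finset.mem_filter, Finset.mem_univ, true_and]
    have hp' := Finset.mem_filter.mp hp
    have hb := arc_bounds (A := A) hp'.1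
    have hij : i ≤ p.1 ∧ p.2 ≤ j := hp'.2
    intro h0
    have h1 := congrFun h0 ⟨⟨p.1 - 1, by omega⟩, by simp; omega⟩
    simp only [Matrix.transpose_apply, Pi.zero_apply] at h1
    rw [hEntry] at h1
    simp only at h1
    rw [show p.1 - 1 + 1 = p.1 by omega, show p.2 - 1 + 1 = p.2 by omega] at h1
    rw [if_pos (by exact hp'.1)] at h1
    exact one_ne_zero h1
  case refine_4 =>
    intro p hp q hq heq
    have hp' := Finset.mem_filter.mp hp
    have hq' := Finset.mem_filter.mp hq
    have hbp := arc_bounds (A := A) hp'.1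
    have hbq := arc_bounds (A := A) hq'.1
    have h2 : p.2 - 1 = q.2 - 1 := congrArg (fun x => ((x : Fin n) : ℕ)) (Subtype.ext_iff.mp heq)
    exact right_unique (A := A) hp'.1 hq'.1 (by omega)
  case refine_5 =>
    intro c hc
    simp only [Finset.mem_filter, Finset.mem_univ, true_and] at hc
    have hex : ∃ r, (Nᵀ c) r ≠ 0 := by
      by_contra hall
      push_neg at hall
      exact hc (funext fun r => by simpa using hall r)
    obtain ⟨r, hr⟩ := hex
    rw [Matrix.transpose_apply, hEntry] at hr
    have hmem : (((r : Fin n) : ℕ) + 1, ((c : Fin n) : ℕ) + 1) ∈ arcs n A := by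
      by_contra hmm; rw [if_neg hmm] at hr; exact hr rfl
    refine ⟨(((r : Fin n) : ℕ) + 1, ((c : Fin n) : ℕ) + 1), ?_, ?_⟩
    · simp only [Finset.mem_filter]
      exact ⟨hmem, r.2, c.2⟩
    · apply Subtype.ext; apply Fin.ext; simp

lemma sum_vertexDepth (n : ℕ) (A : Finpartition (Finset.Icc 1 n)) :
    ∑ v ∈ Finset.Icc 1 n, vertexDepth n A v = ∑ p ∈ arcs n A, (p.2 - p.1 - 1) := by
  unfold vertexDepth
  simp_rw [Finset.card_filter]
  rw [Finset.sum_comm]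
  refine Finset.sum_congr rfl fun p hp => ?_
  obtain ⟨h1, h2, h3⟩ := arc_bounds (A := A) hp
  rw [← Finset.card_filter]
  have he : (Finset.Icc 1 n).filter (fun v => p.1 < v ∧ v < p.2) = Finset.Ioo p.1 p.2 := by
    ext v
    simp only [Finset.mem_filter, Finset.mem_Icc, Finset.mem_Ioo]
    omega
  rw [he, Nat.card_Ioo]

lemma sum_arcDepth (n : ℕ) (A : Finpartition (Finset.Icc 1 n)) :
    ∑ α ∈ arcs n A, arcDepth n A α
      = (((arcs n A) ×ˢ (arcs n A)).filter
          (fun pq => pq.1.1 < pq.2.1 ∧ pq.2.2 < pq.1.2)).card := by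
  rw [Finset.card_filter, Finset.sum_product]
  rw [Finset.sum_comm]
  unfold arcDepth
  simp_rw [Finset.card_filter]

lemma pair_swap_card (n : ℕ) (A : Finpartition (Finset.Icc 1 n)) :
    (((arcs n A) ×ˢ (arcs n A)).filter (fun pq => pq.2.1 < pq.1.1)).card
      = (((arcs n A) ×ˢ (arcs n A)).filter (fun pq => pq.1.1 < pq.2.1)).card := by
  apply Finset.card_bij (fun pq _ => Prod.swap pq)
  · intro pq hpq
    simp only [Finset.mem_filter, Finset.mem_product] at hpq ⊢
    exact ⟨⟨hpq.1.2, hpq.1.1⟩, hpq.2⟩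
  · intro p _ q _ h
    exact Prod.swap_injective h
  · intro pq hpq
    simp only [Finset.mem_filter, Finset.mem_product] at hpq
    refine ⟨Prod.swap pq, ?_, by simp⟩
    simp only [Finset.mem_filter, Finset.mem_product]
    exact ⟨⟨hpq.1.2, hpq.1.1⟩, hpq.2⟩

lemma diag_card (n : ℕ) (A : Finpartition (Finset.Icc 1 n)) :
    (((arcs n A) ×ˢ (arcs n A)).filter
      (fun pq => ¬ pq.1.1 < pq.2.1 ∧ ¬ pq.2.1 < pq.1.1)).card = (arcs n A).card := by
  apply Finset.card_bij (fun pq _ => pq.1)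
  · intro pq hpq
    simp only [Finset.mem_filter, Finset.mem_product] at hpq
    exact hpq.1.1
  · intro p hp q hq h
    simp only [Finset.mem_filter, Finset.mem_product] at hp hq
    have hp2 : p.1 = p.2 := left_unique (A := A) hp.1.1 hp.1.2 (by omega)
    have hq2 : q.1 = q.2 := left_unique (A := A) hq.1.1 hq.1.2 (by omega)
    exact Prod.ext h (hp2 ▸ hq2 ▸ h)
  · intro a ha
    refine ⟨(a, a), ?_, rfl⟩
    simp only [Finset.mem_filter, Finset.mem_product]
    exact ⟨⟨ha, ha⟩, by omega⟩

lemma K_split (n : ℕ) (A : Finpartition (Finset.Icc 1 n)) :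
    (((arcs n A) ×ˢ (arcs n A)).filter (fun pq => pq.1.1 < pq.2.1)).card * 2
      + (arcs n A).card = (arcs n A).card * (arcs n A).card := by
  classical
  have e1 := Finset.card_filter_add_card_filter_not
    (s := (arcs n A) ×ˢ (arcs n A)) (p := fun pq => pq.1.1 < pq.2.1)
  have e2 := Finset.card_filter_add_card_filter_not
    (s := ((arcs n A) ×ˢ (arcs n A)).filter (fun pq => ¬ pq.1.1 < pq.2.1))
    (p := fun pq => pq.2.1 < pq.1.1)
  rw [Finset.filter_filter, Finset.filter_filter] at e2
  have e3 : (((arcs n A) ×ˢ (arcs n A)).filter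
      (fun pq => ¬ pq.1.1 < pq.2.1 ∧ pq.2.1 < pq.1.1))
      = (((arcs n A) ×ˢ (arcs n A)).filter (fun pq => pq.2.1 < pq.1.1)) := by
    ext x
    simp only [Finset.mem_filter]
    constructor
    · rintro ⟨h1, h2⟩; exact ⟨h1, h2.2⟩
    · rintro ⟨h1, h2⟩; exact ⟨h1, by omega, h2⟩
  rw [e3, pair_swap_card n A] at e2
  rw [Finset.card_product] at e1
  have e4 := diag_card n A
  omega

lemma gaussNat (m : ℕ) : (∑ i ∈ Finset.Icc 1 m, i) * 2 = m * (m + 1) := by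
  induction m with
  | zero => simp
  | succ k ih =>
    rw [Finset.sum_Icc_succ_top (by omega : 1 ≤ k + 1), add_mul, ih]
    ring

lemma count_P (n : ℕ) (A : Finpartition (Finset.Icc 1 n)) :
    (((Finset.Icc 2 n ×ˢ Finset.Icc 1 (n - 1))).filter
      (fun p => ∃ b, (p.1 - 1, b) ∈ arcs n A ∧ b ≤ p.2 + 1)).card
      = ∑ q ∈ arcs n A, (n + 1 - q.2) := by
  classical
  have hset : ((Finset.Icc 2 n ×ˢ Finset.Icc 1 (n - 1))).filter
      (fun p => ∃ b, (p.1 - 1, b) ∈ arcs n A ∧ b ≤ p.2 + 1)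
      = (arcs n A).biUnion (fun q => {q.1 + 1} ×ˢ Finset.Icc (q.2 - 1) (n - 1)) := by
    ext ⟨i, j⟩
    simp only [Finset.mem_filter, Finset.mem_product, Finset.mem_Icc, Finset.mem_biUnion,
      Finset.mem_singleton]
    constructor
    · rintro ⟨⟨⟨hi2, hin⟩, hj1, hjn⟩, b, hb, hbj⟩
      obtain ⟨h1, h2, h3⟩ := arc_bounds (A := A) hb
      exact ⟨(i - 1, b), hb, by omega, by omega, by omega⟩
    · rintro ⟨q, hq, hi, hj1, hj2⟩
      obtain ⟨h1, h2, h3⟩ := arc_bounds (A := A) hq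
      refine ⟨⟨⟨by omega, by omega⟩, by omega, by omega⟩, q.2, ?_, by omega⟩
      have : (i - 1, q.2) = q := by
        have : i - 1 = q.1 := by omega
        rw [this]
      rwa [this]
  rw [hset, Finset.card_biUnion]
  · refine Finset.sum_congr rfl fun q hq => ?_
    obtain ⟨h1, h2, h3⟩ := arc_bounds (A := A) hq
    rw [Finset.card_product, Finset.card_singleton, Nat.card_Icc]
    omega
  · intro p hp q hq hne
    simp only [Finset.disjoint_left]
    rintro ⟨i, j⟩ hi hj
    simp only [Finset.mem_product, Finset.mem_singleton] at hi hj
    exact hne (left_unique (A := A) hp hq (by omega))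

lemma count_Q (n : ℕ) (A : Finpartition (Finset.Icc 1 n)) :
    (((Finset.Icc 2 n ×ˢ Finset.Icc 1 (n - 1))).filter
      (fun p => ∃ a, (a, p.2 + 1) ∈ arcs n A ∧ p.1 ≤ a)).card
      = ∑ q ∈ arcs n A, (q.1 - 1) := by
  classical
  have hset : ((Finset.Icc 2 n ×ˢ Finset.Icc 1 (n - 1))).filter
      (fun p => ∃ a, (a, p.2 + 1) ∈ arcs n A ∧ p.1 ≤ a)
      = (arcs n A).biUnion (fun q => Finset.Icc 2 q.1 ×ˢ {q.2 - 1}) := by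
    ext ⟨i, j⟩
    simp only [Finset.mem_filter, Finset.mem_product, Finset.mem_Icc, Finset.mem_biUnion,
      Finset.mem_singleton]
    constructor
    · rintro ⟨⟨⟨hi2, hin⟩, hj1, hjn⟩, a, ha, hia⟩
      obtain ⟨h1, h2, h3⟩ := arc_bounds (A := A) ha
      exact ⟨(a, j + 1), ha, ⟨by omega, by omega⟩, by omega⟩
    · rintro ⟨q, hq, ⟨hi2, hi⟩, hj⟩
      obtain ⟨h1, h2, h3⟩ := arc_bounds (A := A) hq
      refine ⟨⟨⟨by omega, by omega⟩, by omega, by omega⟩, q.1, ?_, by omega⟩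
      have : (q.1, j + 1) = q := by
        have : j + 1 = q.2 := by omega
        rw [this]
      rwa [this]
  rw [hset, Finset.card_biUnion]
  · refine Finset.sum_congr rfl fun q hq => ?_
    obtain ⟨h1, h2, h3⟩ := arc_bounds (A := A) hq
    rw [Finset.card_product, Finset.card_singleton, Nat.card_Icc]
    omega
  · intro p hp q hq hne
    simp only [Finset.disjoint_left]
    rintro ⟨i, j⟩ hi hj
    simp only [Finset.mem_product, Finset.mem_singleton] at hi hj
    obtain ⟨b1, b2, b3⟩ := arc_bounds (A := A) hp
    obtain ⟨c1, c2, c3⟩ := arc_bounds (A := A) hq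
    exact hne (right_unique (A := A) hp hq (by omega))

lemma count_PQ (n : ℕ) (A : Finpartition (Finset.Icc 1 n)) :
    (((Finset.Icc 2 n ×ˢ Finset.Icc 1 (n - 1))).filter
      (fun p => (∃ b, (p.1 - 1, b) ∈ arcs n A ∧ b ≤ p.2 + 1)
        ∧ (∃ a, (a, p.2 + 1) ∈ arcs n A ∧ p.1 ≤ a))).card
      = (((arcs n A) ×ˢ (arcs n A)).filter
          (fun pq => pq.1.1 < pq.2.1 ∧ pq.1.2 ≤ pq.2.2)).card := by
  classical
  symm
  apply Finset.card_bij (fun pq _ => (pq.1.1 + 1, pq.2.2 - 1))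
  · intro pq hpq
    simp only [Finset.mem_filter, Finset.mem_product] at hpq
    obtain ⟨⟨hp, hq⟩, hlt, hle⟩ := hpq
    obtain ⟨b1, b2, b3⟩ := arc_bounds (A := A) hp
    obtain ⟨c1, c2, c3⟩ := arc_bounds (A := A) hq
    simp only [Finset.mem_filter, Finset.mem_product, Finset.mem_Icc]
    refine ⟨⟨⟨by omega, by omega⟩, by omega, by omega⟩, ⟨pq.1.2, ?_, by omega⟩,
      ⟨pq.2.1, ?_, by omega⟩⟩
    · have e : (pq.1.1 + 1 - 1, pq.1.2) = pq.1 := by simp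
      rwa [e]
    · have e : (pq.2.1, pq.2.2 - 1 + 1) = pq.2 := by
        have : pq.2.2 - 1 + 1 = pq.2.2 := by omega
        rw [this]
      rwa [e]
  · intro p hp q hq h
    simp only [Finset.mem_filter, Finset.mem_product] at hp hq
    obtain ⟨⟨hp1, hp2⟩, -, -⟩ := hp
    obtain ⟨⟨hq1, hq2⟩, -, -⟩ := hq
    have e1 : p.1.1 + 1 = q.1.1 + 1 := congrArg Prod.fst h
    have e2 : p.2.2 - 1 = q.2.2 - 1 := congrArg Prod.snd h
    obtain ⟨b1, b2, b3⟩ := arc_bounds (A := A) hp2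
    obtain ⟨c1, c2, c3⟩ := arc_bounds (A := A) hq2
    have f1 : p.1 = q.1 := left_unique (A := A) hp1 hq1 (by omega)
    have f2 : p.2 = q.2 := right_unique (A := A) hp2 hq2 (by omega)
    exact Prod.ext f1 f2
  · rintro ⟨i, j⟩ hij
    simp only [Finset.mem_filter, Finset.mem_product, Finset.mem_Icc] at hij
    obtain ⟨⟨⟨hi2, hin⟩, hj1, hjn⟩, ⟨b, hb, hbj⟩, ⟨a, ha, hia⟩⟩ := hij
    obtain ⟨b1, b2, b3⟩ := arc_bounds (A := A) hb
    obtain ⟨c1, c2, c3⟩ := arc_bounds (A := A) ha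
    refine ⟨((i - 1, b), (a, j + 1)), ?_, ?_⟩
    · simp only [Finset.mem_filter, Finset.mem_product]
      exact ⟨⟨hb, ha⟩, by omega, by omega⟩
    · simp only [Prod.mk.injEq]
      omega

lemma neq_iff (n : ℕ) (A : Finpartition (Finset.Icc 1 n)) (i j : ℕ) (hi : 2 ≤ i) (hj : 1 ≤ j) :
    (rankControl n (adjMatrix n A) i j ≠ rankControl n (adjMatrix n A) (i - 1) (j + 1))
      ↔ ((∃ b, (i - 1, b) ∈ arcs n A ∧ b ≤ j + 1) ∨ (∃ a, (a, j + 1) ∈ arcs n A ∧ i ≤ a)) := by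
  classical
  rw [rankControl_adj, rankControl_adj]
  set F := (arcs n A).filter (fun p => i ≤ p.1 ∧ p.2 ≤ j) with hF
  set F' := (arcs n A).filter (fun p => i - 1 ≤ p.1 ∧ p.2 ≤ j + 1) with hF'
  have hsub : F ⊆ F' := by
    intro p hp
    simp only [hF, hF', Finset.mem_filter] at hp ⊢
    exact ⟨hp.1, by omega, by omega⟩
  constructor
  · intro hne
    have hssub : F ⊂ F' := by
      refine ⟨hsub, fun h => hne ?_⟩
      exact (congrArg Finset.card (Finset.Subset.antisymm hsub h)).symm ▸ rfl
    obtain ⟨x, hx', hx⟩ := Finset.exists_of_ssubset hssub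
    simp only [hF, hF', Finset.mem_filter, not_and] at hx' hx
    obtain ⟨hxa, hx1, hx2⟩ := hx'
    obtain ⟨d1, d2, d3⟩ := arc_bounds (A := A) hxa
    by_cases hcase : i ≤ x.1
    · right
      refine ⟨x.1, ?_, hcase⟩
      have hx2' : x.2 = j + 1 := by
        by_contra hne2
        exact (hx hxa hcase (by omega)).elim
      rw [show (x.1, j + 1) = x by rw [← hx2']]
      exact hxa
    · left
      refine ⟨x.2, ?_, hx2⟩
      rw [show (i - 1, x.2) = x by
        have : i - 1 = x.1 := by omega
        rw [this]]
      exact hxa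
  · intro hor
    have : ∃ x ∈ F', x ∉ F := by
      rcases hor with ⟨b, hb, hbj⟩ | ⟨a, ha, hia⟩
      · refine ⟨(i - 1, b), ?_, ?_⟩
        · simp only [hF', Finset.mem_filter]
          exact ⟨hb, le_refl _, hbj⟩
        · simp only [hF, Finset.mem_filter]
          rintro ⟨-, h1, -⟩
          omega
      · refine ⟨(a, j + 1), ?_, ?_⟩
        · simp only [hF', Finset.mem_filter]
          exact ⟨ha, by omega, le_refl _⟩
        · simp only [hF, Finset.mem_filter]
          rintro ⟨-, -, h2⟩
          omega
    obtain ⟨x, hx', hx⟩ := this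
    have : F ⊂ F' := Finset.ssubset_iff_of_subset hsub |>.mpr ⟨x, hx', hx⟩
    exact Nat.ne_of_lt (Finset.card_lt_card this)

/-- For `n ≥ 1` and a set partition `A` of `{1,…,n}`, the depth index of
`A` equals the number of strict inequalities along south-west to north-east antidiagonals
of the rank-control matrix of `M(A)`:
`t(A) = D(A) = #{(i,j) : 2 ≤ i ≤ n, 1 ≤ j ≤ n−1, r_{i,j} ≠ r_{i−1,j+1}}`. -/
theorem depthIndex_eq_D (n : ℕ) (hn : 1 ≤ n) (A : Finpartition (Finset.Icc 1 n)) :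
    depthIndex n A =
      (((Finset.Icc 2 n ×ˢ Finset.Icc 1 (n - 1))).filter
        (fun p => rankControl n (adjMatrix n A) p.1 p.2 ≠
          rankControl n (adjMatrix n A) (p.1 - 1) (p.2 + 1))).card := by
  classical
  set m := (arcs n A).card with hm
  have hfilt : ((Finset.Icc 2 n ×ˢ Finset.Icc 1 (n - 1))).filter
        (fun p => rankControl n (adjMatrix n A) p.1 p.2 ≠
          rankControl n (adjMatrix n A) (p.1 - 1) (p.2 + 1))
      = ((Finset.Icc 2 n ×ˢ Finset.Icc 1 (n - 1))).filter
        (fun p => (∃ b, (p.1 - 1, b) ∈ arcs n A ∧ b ≤ p.2 + 1)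
          ∨ (∃ a, (a, p.2 + 1) ∈ arcs n A ∧ p.1 ≤ a)) := by
    apply Finset.filter_congr
    intro p hp
    simp only [Finset.mem_product, Finset.mem_Icc] at hp
    exact neq_iff n A p.1 p.2 hp.1.1 hp.2.1
  rw [hfilt]
  set SP := ((Finset.Icc 2 n ×ˢ Finset.Icc 1 (n - 1))).filter
      (fun p => ∃ b, (p.1 - 1, b) ∈ arcs n A ∧ b ≤ p.2 + 1) with hSP
  set SQ := ((Finset.Icc 2 n ×ˢ Finset.Icc 1 (n - 1))).filter
      (fun p => ∃ a, (a, p.2 + 1) ∈ arcs n A ∧ p.1 ≤ a) with hSQ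
  have hor : ((Finset.Icc 2 n ×ˢ Finset.Icc 1 (n - 1))).filter
        (fun p => (∃ b, (p.1 - 1, b) ∈ arcs n A ∧ b ≤ p.2 + 1)
          ∨ (∃ a, (a, p.2 + 1) ∈ arcs n A ∧ p.1 ≤ a)) = SP ∪ SQ := by
    rw [hSP, hSQ, ← Finset.filter_or]
  rw [hor]
  have hunion := Finset.card_union_add_card_inter SP SQ
  have hinter : SP ∩ SQ = ((Finset.Icc 2 n ×ˢ Finset.Icc 1 (n - 1))).filter
      (fun p => (∃ b, (p.1 - 1, b) ∈ arcs n A ∧ b ≤ p.2 + 1)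
        ∧ (∃ a, (a, p.2 + 1) ∈ arcs n A ∧ p.1 ≤ a)) := by
    rw [hSP, hSQ, ← Finset.filter_and]
  -- pair counts
  set K := (((arcs n A) ×ˢ (arcs n A)).filter (fun pq => pq.1.1 < pq.2.1)).card with hK
  set N1 := (((arcs n A) ×ˢ (arcs n A)).filter
      (fun pq => pq.1.1 < pq.2.1 ∧ pq.1.2 ≤ pq.2.2)).card with hN1
  set N2 := (((arcs n A) ×ˢ (arcs n A)).filter
      (fun pq => pq.1.1 < pq.2.1 ∧ pq.2.2 < pq.1.2)).card with hN2
  have hsplit : N1 + N2 = K := by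
    have h := Finset.card_filter_add_card_filter_not
      (s := ((arcs n A) ×ˢ (arcs n A)).filter (fun pq => pq.1.1 < pq.2.1))
      (p := fun pq => pq.1.2 ≤ pq.2.2)
    rw [Finset.filter_filter, Finset.filter_filter] at h
    have e : (((arcs n A) ×ˢ (arcs n A)).filter
        (fun pq => pq.1.1 < pq.2.1 ∧ ¬ pq.1.2 ≤ pq.2.2))
        = (((arcs n A) ×ˢ (arcs n A)).filter
        (fun pq => pq.1.1 < pq.2.1 ∧ pq.2.2 < pq.1.2)) := by
      ext x
      simp only [Finset.mem_filter]
      constructor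
      · rintro ⟨h1, h2, h3⟩; exact ⟨h1, h2, by omega⟩
      · rintro ⟨h1, h2, h3⟩; exact ⟨h1, h2, by omega⟩
    rw [e] at h
    exact h
  have hKm : (K : ℤ) * 2 + m = m * m := by
    have := K_split n A
    rw [← hK, ← hm] at this
    exact_mod_cast this
  -- integer versions of the sums
  have e_sv : ∑ v ∈ Finset.Icc 1 n, (vertexDepth n A v : ℤ)
      = ∑ p ∈ arcs n A, ((p.2 : ℤ) - p.1 - 1) := by
    rw [← Nat.cast_sum, sum_vertexDepth n A, Nat.cast_sum]
    refine Finset.sum_congr rfl fun p hp => ?_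
    obtain ⟨h1, h2, h3⟩ := arc_bounds (A := A) hp
    omega
  have e_ad : ∑ α ∈ arcs n A, (arcDepth n A α : ℤ) = (N2 : ℤ) := by
    rw [← Nat.cast_sum, sum_arcDepth n A, hN2]
  have e_c1 : (SP.card : ℤ) = ∑ q ∈ arcs n A, ((n : ℤ) + 1 - q.2) := by
    rw [hSP, count_P n A, Nat.cast_sum]
    refine Finset.sum_congr rfl fun q hq => ?_
    obtain ⟨h1, h2, h3⟩ := arc_bounds (A := A) hq
    omega
  have e_c2 : (SQ.card : ℤ) = ∑ q ∈ arcs n A, ((q.1 : ℤ) - 1) := by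
    rw [hSQ, count_Q n A, Nat.cast_sum]
    refine Finset.sum_congr rfl fun q hq => ?_
    obtain ⟨h1, h2, h3⟩ := arc_bounds (A := A) hq
    omega
  have e_c3 : ((SP ∩ SQ).card : ℤ) = (N1 : ℤ) := by
    rw [hinter, count_PQ n A, hN1]
  have e_combine : (∑ p ∈ arcs n A, ((p.2 : ℤ) - p.1 - 1))
      + (∑ q ∈ arcs n A, ((n : ℤ) + 1 - q.2))
      + (∑ q ∈ arcs n A, ((q.1 : ℤ) - 1)) = (m : ℤ) * n - m := by
    rw [← Finset.sum_add_distrib, ← Finset.sum_add_distrib]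
    have : ∀ p ∈ arcs n A, ((p.2 : ℤ) - p.1 - 1) + ((n : ℤ) + 1 - p.2) + ((p.1 : ℤ) - 1)
        = (n : ℤ) - 1 := fun p _ => by ring
    rw [Finset.sum_congr rfl this, Finset.sum_const, ← hm, nsmul_eq_mul]
    ring
  have e_gauss : (∑ i ∈ Finset.Icc 1 m, (i : ℤ)) * 2 = (m : ℤ) * m + m := by
    have := gaussNat m
    have h2 : ((∑ i ∈ Finset.Icc 1 m, i : ℕ) : ℤ) * 2 = (m : ℤ) * ((m : ℤ) + 1) := by
      exact_mod_cast congrArg (Nat.cast : ℕ → ℤ) this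
    rw [Nat.cast_sum] at h2
    linarith [h2]
  have e_S1 : ∑ i ∈ Finset.Icc 1 m, ((n : ℤ) - (i : ℤ))
      = (m : ℤ) * n - ∑ i ∈ Finset.Icc 1 m, (i : ℤ) := by
    rw [Finset.sum_sub_distrib, Finset.sum_const, Nat.card_Icc]
    simp only [nsmul_eq_mul]
    push_cast
    ring
  -- final assembly
  unfold depthIndex
  rw [e_sv, e_ad, e_S1]
  have hu : ((SP ∪ SQ).card : ℤ) = (SP.card : ℤ) + SQ.card - (SP ∩ SQ).card := by
    omega
  rw [hu, e_c1, e_c2, e_c3]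
  have hs : (N1 : ℤ) + N2 = K := by exact_mod_cast hsplit
  linarith [e_combine, hKm, e_gauss, hs]
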